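/- (Lemma 2.1.) Let C₁, C₂ > 0 and for σ > 0 define ρ_σ : ℤ³ → ℝ by ρ_σ(n) := C₁/(C₂ + |n|^{3+σ}). Then for all s, s' > 0 there exists a constant C > 0 such that for every n ∈ ℤ³, ∑_{k∈ℤ³} ρ_s(k) ρ_{s'}(n−k) ≤ C · ρ_{min{s,s'}}(n). -/

import Mathlib

open scoped BigOperators

noncomputable section

abbrev Z3 : Type := Fin 3 → ℤ

/-- `|n|²` for `n ∈ ℤ³` (square of the Euclidean norm). -/
def nsq (n : Z3) : ℝ := ∑ i, ((n i : ℝ)) ^ 2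

/-- The weight `ρ_σ(n) = C₁/(C₂ + |n|^{3+σ})`. -/
def rho (C₁ C₂ σ : ℝ) (n : Z3) : ℝ := C₁ / (C₂ + Real.sqrt (nsq n) ^ (3 + σ))

/-- The Euclidean norm of a lattice point. -/
def nu (n : Z3) : ℝ := Real.sqrt (nsq n)

lemma nsq_nonneg (n : Z3) : 0 ≤ nsq n := Finset.sum_nonneg fun _ _ => sq_nonneg _

lemma nu_nonneg (n : Z3) : 0 ≤ nu n := Real.sqrt_nonneg _

lemma abs_coord_le_nu (n : Z3) (i : Fin 3) : |((n i : ℝ))| ≤ nu n := by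
  rw [← Real.sqrt_sq_eq_abs]
  exact Real.sqrt_le_sqrt (Finset.single_le_sum (f := fun j => ((n j : ℝ)) ^ 2)
    (fun _ _ => sq_nonneg _) (Finset.mem_univ i))

def emb (n : Z3) : EuclideanSpace ℝ (Fin 3) := WithLp.toLp 2 (fun i => (n i : ℝ))

lemma nu_eq_norm (n : Z3) : nu n = ‖emb n‖ := by
  simp only [EuclideanSpace.norm_eq, nu, nsq, Real.norm_eq_abs, sq_abs]
  rfl

lemma nu_triangle (a b : Z3) : nu (a + b) ≤ nu a + nu b := by
  rw [nu_eq_norm, nu_eq_norm, nu_eq_norm]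
  have : emb (a + b) = emb a + emb b := by
    ext i
    simp [emb]
  rw [this]
  exact norm_add_le _ _

lemma nu_zero_or_one_le (n : Z3) : nu n = 0 ∨ 1 ≤ nu n := by
  by_cases h : n = 0
  · left
    simp [h, nu, nsq]
  · right
    obtain ⟨i, hi⟩ : ∃ i, n i ≠ 0 := by
      by_contra hc
      push_neg at hc
      exact h (funext hc)
    calc (1 : ℝ) ≤ |((n i : ℝ))| := by
          rw [← Int.cast_abs]
          exact_mod_cast Int.one_le_abs hi
      _ ≤ nu n := abs_coord_le_nu n i

lemma denom_pos {C₂ : ℝ} (hC₂ : 0 < C₂) (σ : ℝ) (n : Z3) :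
    0 < C₂ + Real.sqrt (nsq n) ^ (3 + σ) :=
  add_pos_of_pos_of_nonneg hC₂ (Real.rpow_nonneg (Real.sqrt_nonneg _) _)

lemma rho_pos {C₁ C₂ : ℝ} (hC₁ : 0 < C₁) (hC₂ : 0 < C₂) (σ : ℝ) (n : Z3) :
    0 < rho C₁ C₂ σ n :=
  div_pos hC₁ (denom_pos hC₂ σ n)

/-- Monotonicity in the exponent on the integer lattice. -/
lemma rho_mono {C₁ C₂ : ℝ} (hC₁ : 0 < C₁) (hC₂ : 0 < C₂) {m σ : ℝ} (hm : 0 < m)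
    (hmσ : m ≤ σ) (n : Z3) : rho C₁ C₂ σ n ≤ rho C₁ C₂ m n := by
  unfold rho
  have key : Real.sqrt (nsq n) ^ (3 + m) ≤ Real.sqrt (nsq n) ^ (3 + σ) := by
    rcases nu_zero_or_one_le n with h | h
    · rw [show Real.sqrt (nsq n) = nu n from rfl, h,
        Real.zero_rpow (by linarith), Real.zero_rpow (by linarith)]
    · exact Real.rpow_le_rpow_of_exponent_le h (by linarith)
  gcongr

/-- Doubling bound: if `|n| ≤ 2|k|` then `ρ_m(k) ≤ 2^(3+m) ρ_m(n)`. -/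
lemma rho_doubling {C₁ C₂ : ℝ} (hC₁ : 0 < C₁) (hC₂ : 0 < C₂) {m : ℝ} (hm : 0 < m) {n k : Z3}
    (h : nu n ≤ 2 * nu k) :
    rho C₁ C₂ m k ≤ 2 ^ (3 + m) * rho C₁ C₂ m n := by
  have hpow : nu n ^ (3 + m) ≤ 2 ^ (3 + m) * nu k ^ (3 + m) := by
    calc nu n ^ (3 + m) ≤ (2 * nu k) ^ (3 + m) :=
          Real.rpow_le_rpow (nu_nonneg n) h (by linarith)
      _ = 2 ^ (3 + m) * nu k ^ (3 + m) :=
          Real.mul_rpow (by norm_num) (nu_nonneg k)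
  have h2 : (1 : ℝ) ≤ 2 ^ (3 + m) :=
    Real.one_le_rpow one_le_two (by linarith)
  have h2pos : (0 : ℝ) < 2 ^ (3 + m) := lt_of_lt_of_le one_pos h2
  have hdn := denom_pos hC₂ m n
  have hdk := denom_pos hC₂ m k
  unfold rho
  rw [mul_div_assoc', div_le_div_iff₀ hdk hdn]
  show C₁ * (C₂ + nu n ^ (3 + m)) ≤ 2 ^ (3 + m) * C₁ * (C₂ + nu k ^ (3 + m))
  nlinarith [mul_le_mul_of_nonneg_left hpow hC₁.le,
    mul_nonneg (mul_nonneg hC₁.le hC₂.le) (sub_nonneg.2 h2)]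

/-- Key pointwise bound for the convolution. -/
lemma rho_key {C₁ C₂ : ℝ} (hC₁ : 0 < C₁) (hC₂ : 0 < C₂) {m : ℝ} (hm : 0 < m) (n k : Z3) :
    rho C₁ C₂ m k * rho C₁ C₂ m (n - k) ≤
      2 ^ (3 + m) * rho C₁ C₂ m n * (rho C₁ C₂ m k + rho C₁ C₂ m (n - k)) := by
  have htri : nu n ≤ nu k + nu (n - k) := by
    have := nu_triangle k (n - k)
    rwa [add_sub_cancel] at this
  rcases le_total (nu k) (nu (n - k)) with hle | hle
  · have hd : rho C₁ C₂ m (n - k) ≤ 2 ^ (3 + m) * rho C₁ C₂ m n :=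
      rho_doubling hC₁ hC₂ hm (by linarith)
    nlinarith [rho_pos hC₁ hC₂ m k, rho_pos hC₁ hC₂ m (n - k), rho_pos hC₁ hC₂ m n]
  · have hd : rho C₁ C₂ m k ≤ 2 ^ (3 + m) * rho C₁ C₂ m n :=
      rho_doubling hC₁ hC₂ hm (by linarith)
    nlinarith [rho_pos hC₁ hC₂ m k, rho_pos hC₁ hC₂ m (n - k), rho_pos hC₁ hC₂ m n]

set_option maxHeartbeats 1000000 in
/-- Summability of `ρ_m` on `ℤ³`. -/
lemma rho_summable {C₁ C₂ : ℝ} (hC₁ : 0 < C₁) (hC₂ : 0 < C₂) {m : ℝ} (hm : 0 < m) :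
    Summable (rho C₁ C₂ m) := by
  set q : ℝ := 1 + m / 3 with hqdef
  have hq1 : 1 < q := by rw [hqdef]; linarith
  have hq0 : 0 ≤ q := by linarith
  set g : ℤ → ℝ := fun j => 1 / (1 + |(j : ℝ)|) ^ q with hgdef
  have hgpos : ∀ j, 0 < g j := fun j =>
    div_pos one_pos (Real.rpow_pos_of_pos (by positivity) _)
  have hgnat : Summable (fun n : ℕ => 1 / (1 + (n : ℝ)) ^ q) := by
    have h := (Real.summable_one_div_nat_add_rpow 1 q).2 hq1
    refine h.congr fun n => ?_
    rw [abs_of_nonneg (by positivity), add_comm]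
  have hgsum : Summable g := by
    rw [summable_int_iff_summable_nat_and_neg]
    constructor
    · refine hgnat.congr fun n => ?_
      simp [hgdef]
    · refine hgnat.congr fun n => ?_
      simp [hgdef]
  have hF : Summable (fun x : ℤ × ℤ × ℤ => g x.1 * (g x.2.1 * g x.2.2)) :=
    hgsum.mul_of_nonneg
      (hgsum.mul_of_nonneg hgsum (fun j => (hgpos j).le) (fun j => (hgpos j).le))
      (fun j => (hgpos j).le)
      (fun x => mul_nonneg (hgpos _).le (hgpos _).le)
  let e : Z3 ≃ ℤ × ℤ × ℤ :=
    { toFun := fun k => (k 0, k 1, k 2)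
      invFun := fun x => ![x.1, x.2.1, x.2.2]
      left_inv := fun k => by funext i; fin_cases i <;> rfl
      right_inv := fun x => rfl }
  have hprod : Summable (fun k : Z3 => g (k 0) * (g (k 1) * g (k 2))) := by
    have := (e.summable_iff (f := fun x : ℤ × ℤ × ℤ => g x.1 * (g x.2.1 * g x.2.2))).2 hF
    exact this.congr fun k => rfl
  set M : ℝ := max (1 / C₂) 1 with hMdef
  have hM1 : (1 : ℝ) ≤ M := le_max_right _ _
  have hMC : (1 : ℝ) ≤ M * C₂ := by
    have h1 : 1 / C₂ ≤ M := le_max_left _ _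
    have := mul_le_mul_of_nonneg_right h1 hC₂.le
    rwa [one_div_mul_cancel hC₂.ne'] at this
  set K : ℝ := C₁ * (2 ^ (3 + m) * M) with hKdef
  have hbound : ∀ k : Z3, rho C₁ C₂ m k ≤ K * (g (k 0) * (g (k 1) * g (k 2))) := by
    intro k
    set ν : ℝ := nu k with hν
    have hν0 : 0 ≤ ν := nu_nonneg k
    have h1ν : (0 : ℝ) < 1 + ν := by linarith
    set p : ℝ := 3 + m with hpdef
    have hp0 : (0 : ℝ) ≤ p := by rw [hpdef]; linarith
    set D : ℝ := (1 + |((k 0 : ℤ) : ℝ)|) ^ q *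
      ((1 + |((k 1 : ℤ) : ℝ)|) ^ q * (1 + |((k 2 : ℤ) : ℝ)|) ^ q) with hDdef
    have hfac : ∀ i : Fin 3, (1 + |((k i : ℤ) : ℝ)|) ^ q ≤ (1 + ν) ^ q := fun i =>
      Real.rpow_le_rpow (by positivity) (by linarith [abs_coord_le_nu k i]) hq0
    have hfacpos : ∀ i : Fin 3, (0 : ℝ) < (1 + |((k i : ℤ) : ℝ)|) ^ q := fun i =>
      Real.rpow_pos_of_pos (by positivity) _
    have hDpos : 0 < D := by
      rw [hDdef]
      exact mul_pos (hfacpos 0) (mul_pos (hfacpos 1) (hfacpos 2))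
    have hcube : (1 + ν) ^ q * ((1 + ν) ^ q * (1 + ν) ^ q) = (1 + ν) ^ p := by
      rw [← Real.rpow_add h1ν, ← Real.rpow_add h1ν]
      congr 1
      rw [hqdef, hpdef]; ring
    have hDle : D ≤ (1 + ν) ^ p := by
      rw [hDdef, ← hcube]
      have h0 : (0 : ℝ) ≤ (1 + ν) ^ q := (Real.rpow_pos_of_pos h1ν q).le
      exact mul_le_mul (hfac 0)
        (mul_le_mul (hfac 1) (hfac 2) (hfacpos 2).le h0)
        (mul_pos (hfacpos 1) (hfacpos 2)).le (by positivity)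
    have hmax : (1 + ν) ≤ 2 * max 1 ν := by
      rcases le_total ν 1 with h | h
      · rw [max_eq_left h]; linarith
      · rw [max_eq_right h]; linarith
    have hmaxp : (max 1 ν) ^ p ≤ 1 + ν ^ p := by
      rcases le_total ν 1 with h | h
      · rw [max_eq_left h, Real.one_rpow]
        have := Real.rpow_nonneg hν0 p
        linarith
      · rw [max_eq_right h]
        linarith
    have hstep : (1 + ν) ^ p ≤ 2 ^ p * (1 + ν ^ p) := by
      calc (1 + ν) ^ p ≤ (2 * max 1 ν) ^ p :=
            Real.rpow_le_rpow (by linarith) hmax hp0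
        _ = 2 ^ p * (max 1 ν) ^ p := Real.mul_rpow (by norm_num) (le_max_of_le_left one_pos.le)
        _ ≤ 2 ^ p * (1 + ν ^ p) := by
            have h2 : (0 : ℝ) ≤ 2 ^ p := (Real.rpow_pos_of_pos two_pos p).le
            exact mul_le_mul_of_nonneg_left hmaxp h2
    have hMstep : 1 + ν ^ p ≤ M * (C₂ + ν ^ p) := by
      have hν' : 0 ≤ ν ^ p := Real.rpow_nonneg hν0 p
      nlinarith
    have h2p : (0 : ℝ) < 2 ^ p := Real.rpow_pos_of_pos two_pos p
    have hDfin : D ≤ 2 ^ p * M * (C₂ + ν ^ p) := by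
      calc D ≤ (1 + ν) ^ p := hDle
        _ ≤ 2 ^ p * (1 + ν ^ p) := hstep
        _ ≤ 2 ^ p * (M * (C₂ + ν ^ p)) := mul_le_mul_of_nonneg_left hMstep h2p.le
        _ = 2 ^ p * M * (C₂ + ν ^ p) := by ring
    have hdk : 0 < C₂ + ν ^ p := by
      have := denom_pos hC₂ m k
      exact this
    have hginv : g (k 0) * (g (k 1) * g (k 2)) = 1 / D := by
      rw [hgdef, hDdef]
      simp only [one_div]
      rw [mul_inv, mul_inv]
    rw [hginv]
    rw [show rho C₁ C₂ m k = C₁ / (C₂ + ν ^ p) from rfl, mul_one_div,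
      div_le_div_iff₀ hdk hDpos]
    nlinarith [mul_le_mul_of_nonneg_left hDfin hC₁.le]
  refine Summable.of_nonneg_of_le (fun k => (rho_pos hC₁ hC₂ m k).le) hbound ?_
  exact hprod.mul_left K

/-- **Lemma 2.1.** For `s, s' > 0` the convolution of the weights `ρ_s` and `ρ_{s'}`
is controlled by `ρ_{min(s,s')}`:
`∑_k ρ_s(k) ρ_{s'}(n-k) ≤ C ρ_{min(s,s')}(n)` for all `n ∈ ℤ³`. -/
theorem rho_conv_rho (C₁ C₂ : ℝ) (hC₁ : 0 < C₁) (hC₂ : 0 < C₂)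
    (s s' : ℝ) (hs : 0 < s) (hs' : 0 < s') :
    ∃ C > (0 : ℝ), ∀ n : Z3,
      (∑' k : Z3, rho C₁ C₂ s k * rho C₁ C₂ s' (n - k)) ≤ C * rho C₁ C₂ (min s s') n := by
  set m := min s s' with hmdef
  have hm : 0 < m := lt_min hs hs'
  have hS : Summable (rho C₁ C₂ m) := rho_summable hC₁ hC₂ hm
  set S := ∑' k : Z3, rho C₁ C₂ m k with hSdef
  have hSpos : 0 < S :=
    lt_of_lt_of_le (rho_pos hC₁ hC₂ m 0)
      (hS.le_tsum 0 fun _ _ => (rho_pos hC₁ hC₂ m _).le)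
  have h2pos : (0 : ℝ) < 2 ^ (3 + m) := Real.rpow_pos_of_pos two_pos _
  refine ⟨2 ^ (3 + m) * (2 * S), by positivity, fun n => ?_⟩
  have htrans : Summable (fun k : Z3 => rho C₁ C₂ m (n - k)) :=
    ((Equiv.subLeft n).summable_iff (f := rho C₁ C₂ m)).2 hS
  have hpt : ∀ k : Z3, rho C₁ C₂ s k * rho C₁ C₂ s' (n - k) ≤
      2 ^ (3 + m) * rho C₁ C₂ m n * (rho C₁ C₂ m k + rho C₁ C₂ m (n - k)) := by
    intro k
    have h1 : rho C₁ C₂ s k ≤ rho C₁ C₂ m k := rho_mono hC₁ hC₂ hm (min_le_left _ _) k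
    have h2 : rho C₁ C₂ s' (n - k) ≤ rho C₁ C₂ m (n - k) :=
      rho_mono hC₁ hC₂ hm (min_le_right _ _) (n - k)
    calc rho C₁ C₂ s k * rho C₁ C₂ s' (n - k)
        ≤ rho C₁ C₂ m k * rho C₁ C₂ m (n - k) :=
          mul_le_mul h1 h2 (rho_pos hC₁ hC₂ s' _).le (rho_pos hC₁ hC₂ m _).le
      _ ≤ _ := rho_key hC₁ hC₂ hm n k
  have hRHS : Summable (fun k : Z3 =>
      2 ^ (3 + m) * rho C₁ C₂ m n * (rho C₁ C₂ m k + rho C₁ C₂ m (n - k))) :=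
    (hS.add htrans).mul_left _
  have hLHS : Summable (fun k : Z3 => rho C₁ C₂ s k * rho C₁ C₂ s' (n - k)) :=
    Summable.of_nonneg_of_le
      (fun k => mul_nonneg (rho_pos hC₁ hC₂ s _).le (rho_pos hC₁ hC₂ s' _).le) hpt hRHS
  calc (∑' k : Z3, rho C₁ C₂ s k * rho C₁ C₂ s' (n - k))
      ≤ ∑' k : Z3, 2 ^ (3 + m) * rho C₁ C₂ m n * (rho C₁ C₂ m k + rho C₁ C₂ m (n - k)) :=
        hLHS.tsum_le_tsum hpt hRHS
    _ = 2 ^ (3 + m) * rho C₁ C₂ m n * (S + S) := by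
        rw [tsum_mul_left, hS.tsum_add htrans]
        congr 2
        exact (Equiv.subLeft n).tsum_eq (rho C₁ C₂ m)
    _ = 2 ^ (3 + m) * (2 * S) * rho C₁ C₂ m n := by ring
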